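/- Let (R, m) be a Cohen-Macaulay local ring which is not Gorenstein and whose canonical ideal C is equimultiple. Then the canonical index ρ(R) = red(C) is not equal to 1. -/

import Mathlib

open IsLocalRing

/-- `Hom(I, I) = R`, expressed denominator-freely in the total ring of fractions:
whenever `(x/y)·I ⊆ I` for a regular denominator `y`, the fraction `x/y` lies in `R`. -/
def IsClosedIdeal (R : Type*) [CommRing R] (I : Ideal R) : Prop :=
  ∀ x : R, ∀ y ∈ nonZeroDivisors R, Ideal.span {x} * I ≤ Ideal.span {y} * I → x ∈ Ideal.span {y}

/-- let `(R, m)` be a Cohen-Macaulay local ring which is not Gorenstein (its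
canonical ideal is not principal) and whose canonical ideal `C` is equimultiple (it admits a
principal reduction).  Then the canonical index `ρ(R) = red(C)` is not `1`, i.e. there is no
`a ∈ C` with `C² = aC`.  The canonical ideal is encoded by its operative properties:
it contains a regular element and satisfies `Hom(C, C) = R`. -/
theorem canonical_index_ne_one
    (R : Type*) [CommRing R] [IsLocalRing R] [IsNoetherianRing R]
    (hdim : 1 ≤ ringKrullDim R)
    (C : Ideal R)
    (hCreg : ∃ x ∈ C, x ∈ nonZeroDivisors R)
    (hCclosed : IsClosedIdeal R C)
    (hequi : ∃ a ∈ C, ∃ n : ℕ, C ^ (n + 1) = Ideal.span {a} * C ^ n)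
    (hnotGor : ¬ C.IsPrincipal) :
    ¬ ∃ a ∈ C, C ^ 2 = Ideal.span {a} * C := by
  rintro ⟨a, haC, hsq⟩
  obtain ⟨x₀, hx₀C, hx₀reg⟩ := hCreg
  -- x₀² ∈ C² = aC ⊆ (a)
  have hx₀sq : x₀ * x₀ ∈ Ideal.span {a} := by
    have h1 : x₀ * x₀ ∈ C ^ 2 := by
      rw [pow_two]; exact Ideal.mul_mem_mul hx₀C hx₀C
    rw [hsq] at h1
    exact Ideal.mul_le_left h1
  obtain ⟨r, hr⟩ := Ideal.mem_span_singleton'.mp hx₀sq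
  -- a is a nonzerodivisor since it divides the nonzerodivisor x₀²
  have hareg : a ∈ nonZeroDivisors R := by
    rw [mem_nonZeroDivisors_iff_right]
    intro b hb
    have h2 : b * (x₀ * x₀) = 0 := by
      rw [← hr, mul_comm r a, ← mul_assoc, hb, zero_mul]
    exact mem_nonZeroDivisors_iff_right.mp (Submonoid.mul_mem _ hx₀reg hx₀reg) b h2
  -- every x ∈ C lies in (a)
  have hCsub : C ≤ Ideal.span {a} := by
    intro x hx
    apply hCclosed x a hareg
    have : Ideal.span {x} * C ≤ C ^ 2 := by
      rw [pow_two]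
      exact mul_le_mul' (Ideal.span_le.mpr (Set.singleton_subset_iff.mpr hx)) le_rfl
    rwa [hsq] at this
  have hsub : Ideal.span {a} ≤ C := Ideal.span_le.mpr (Set.singleton_subset_iff.mpr haC)
  exact hnotGor ⟨a, le_antisymm hCsub hsub⟩
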